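/- Let (M, d) be a finite metric space, k ≥ 1, let (s_1, t_1), …, (s_m, t_m) be Uber demands, and let A_0 be an initial configuration. Then the optimal offline Uber cost is at least the optimal offline k-server cost for the source requests: OPT_U ≥ OPT_k. -/

import Mathlib

open Finset

/-- The matching distance between two configurations of `k` servers. -/
noncomputable def matchDist {M : Type*} [MetricSpace M] {k : ℕ} (A B : Fin k → M) : ℝ :=
  ⨅ σ : Equiv.Perm (Fin k), ∑ j, dist (A j) (B (σ j))

/-- The cost of serving the Uber demand `(s, t)` while moving from configuration
`A` to configuration `B`: the minimum over permutations `σ` and server indices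
`j` of `∑_{l ≠ j} d(A l, B (σ l)) + d(A j, s) + d(s, t) + d(t, B (σ j))`. -/
noncomputable def uberServe {M : Type*} [MetricSpace M] {k : ℕ}
    (A B : Fin k → M) (s t : M) : ℝ :=
  ⨅ σ : Equiv.Perm (Fin k), ⨅ j : Fin k,
    ((∑ l ∈ univ.erase j, dist (A l) (B (σ l))) +
      dist (A j) s + dist s t + dist t (B (σ j)))

/-- The optimal offline Uber cost for demands `(s_i, t_i)` starting from
initial configuration `A0`. -/
noncomputable def uberOPT {M : Type*} [MetricSpace M] {k m : ℕ}
    (src dst : Fin m → M) (A0 : Fin k → M) : ℝ :=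
  sInf {c | ∃ A : Fin (m + 1) → Fin k → M, A 0 = A0 ∧
    c = ∑ i : Fin m, uberServe (A i.castSucc) (A i.succ) (src i) (dst i)}

/-- The optimal offline `k`-server cost for the source requests `s_1, …, s_m`
starting from initial configuration `A0`. -/
noncomputable def kServerOPT {M : Type*} [MetricSpace M] {k m : ℕ}
    (src : Fin m → M) (A0 : Fin k → M) : ℝ :=
  sInf {c | ∃ A : Fin (m + 1) → Fin k → M, A 0 = A0 ∧
    (∀ i : Fin m, ∃ j, src i = A i.succ j) ∧
    c = ∑ i : Fin m, matchDist (A i.castSucc) (A i.succ)}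

section Aux

variable {M : Type*} [MetricSpace M] {k : ℕ}

lemma matchDist_nonneg (A B : Fin k → M) : 0 ≤ matchDist A B :=
  le_ciInf fun σ => by positivity

lemma matchDist_le (A B : Fin k → M) (σ : Equiv.Perm (Fin k)) :
    matchDist A B ≤ ∑ j, dist (A j) (B (σ j)) :=
  ciInf_le ⟨0, by rintro x ⟨σ, rfl⟩; positivity⟩ σ

lemma matchDist_triangle (A B C : Fin k → M) :
    matchDist A C ≤ matchDist A B + matchDist B C := by
  unfold matchDist
  refine le_ciInf_add_ciInf fun σ τ => ?_
  calc (⨅ σ : Equiv.Perm (Fin k), ∑ j, dist (A j) (C (σ j)))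
      ≤ ∑ j, dist (A j) (C ((σ.trans τ) j)) := matchDist_le A C (σ.trans τ)
    _ ≤ ∑ j, (dist (A j) (B (σ j)) + dist (B (σ j)) (C (τ (σ j)))) :=
        sum_le_sum fun j _ => dist_triangle _ _ _
    _ = (∑ j, dist (A j) (B (σ j))) + ∑ j, dist (B (σ j)) (C (τ (σ j))) := sum_add_distrib
    _ = _ := by rw [Equiv.sum_comp σ (fun l => dist (B l) (C (τ l)))]

lemma matchDist_self (A : Fin k → M) : matchDist A A = 0 :=
  le_antisymm (by simpa using matchDist_le A A 1) (matchDist_nonneg A A)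

lemma uberServe_min [Nonempty (Fin k)] (A B : Fin k → M) (s t : M) :
    ∃ (σ : Equiv.Perm (Fin k)) (j : Fin k), uberServe A B s t =
      (∑ l ∈ univ.erase j, dist (A l) (B (σ l))) +
        dist (A j) s + dist s t + dist t (B (σ j)) := by
  set F : Equiv.Perm (Fin k) × Fin k → ℝ := fun p =>
    (∑ l ∈ univ.erase p.2, dist (A l) (B (p.1 l))) +
      dist (A p.2) s + dist s t + dist t (B (p.1 p.2)) with hF
  have hnn : ∀ p, 0 ≤ F p := fun p => by simp only [hF]; positivity
  obtain ⟨p, hp⟩ := Finite.exists_min F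
  refine ⟨p.1, p.2, le_antisymm ?_ (le_ciInf fun σ => le_ciInf fun j => hp (σ, j))⟩
  refine le_trans (ciInf_le ⟨0, ?_⟩ p.1) (ciInf_le ⟨0, ?_⟩ p.2)
  · rintro x ⟨σ, rfl⟩
    exact le_ciInf fun j => hnn (σ, j)
  · rintro x ⟨j, rfl⟩
    exact hnn (p.1, j)

end Aux

/-- the optimal offline Uber cost is at least the optimal offline
`k`-server cost for the source requests. -/
theorem kServerOPT_le_uberOPT {M : Type*} [MetricSpace M] [Fintype M] {k m : ℕ}
    (hk : 1 ≤ k) (src dst : Fin m → M) (A0 : Fin k → M) :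
    kServerOPT src A0 ≤ uberOPT src dst A0 := by
  haveI : Nonempty (Fin k) := Fin.pos_iff_nonempty.mp hk
  have hbdd : BddBelow {c | ∃ A : Fin (m + 1) → Fin k → M, A 0 = A0 ∧
      (∀ i : Fin m, ∃ j, src i = A i.succ j) ∧
      c = ∑ i : Fin m, matchDist (A i.castSucc) (A i.succ)} := by
    refine ⟨0, ?_⟩
    rintro c ⟨A, -, -, rfl⟩
    exact sum_nonneg fun i _ => matchDist_nonneg _ _
  refine le_csInf ⟨_, fun _ => A0, rfl, rfl⟩ ?_
  rintro c ⟨A, hA0, rfl⟩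
  choose σ j hmin using fun i : Fin m =>
    uberServe_min (A i.castSucc) (A i.succ) (src i) (dst i)
  -- the k-server schedule
  set B : Fin (m + 1) → Fin k → M := fun n =>
    if h : n = 0 then A0
    else Function.update (A n) (σ (n.pred h) (j (n.pred h))) (src (n.pred h)) with hB
  have hB0 : B 0 = A0 := by simp [hB]
  have hBsucc : ∀ i : Fin m, B i.succ = Function.update (A i.succ) (σ i (j i)) (src i) := by
    intro i
    simp [hB, Fin.succ_ne_zero]
  -- the per-step pieces
  set G : Fin m → ℝ := fun i =>
    (∑ l ∈ univ.erase (j i), dist (A i.castSucc l) (A i.succ (σ i l))) +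
      dist (A i.castSucc (j i)) (src i) with hG
  set E : Fin m → ℝ := fun i =>
    dist (src i) (dst i) + dist (dst i) (A i.succ (σ i (j i))) with hE
  set F : Fin m → ℝ := fun i => matchDist (B i.castSucc) (A i.castSucc) with hF
  -- matchDist (A i.castSucc) (B i.succ) ≤ G i
  have hAB : ∀ i : Fin m, matchDist (A i.castSucc) (B i.succ) ≤ G i := by
    intro i
    refine le_trans (matchDist_le _ _ (σ i)) (le_of_eq ?_)
    rw [← Finset.add_sum_erase univ _ (mem_univ (j i)), hBsucc i, Function.update_self, hG,
      add_comm]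
    congr 1
    refine sum_congr rfl fun l hl => ?_
    rw [Function.update_of_ne ((σ i).injective.ne (mem_erase.mp hl).1)]
  -- step bound
  have hstep : ∀ i : Fin m,
      matchDist (B i.castSucc) (B i.succ) ≤ F i + G i := fun i =>
    le_trans (matchDist_triangle _ (A i.castSucc) _) (add_le_add le_rfl (hAB i))
  -- shifted bound for F
  have hFE : ∀ i : Fin m, matchDist (B i.succ) (A i.succ) ≤ E i := by
    intro i
    rw [hBsucc i]
    refine le_trans (matchDist_le _ _ 1) ?_
    have : (∑ l, dist (Function.update (A i.succ) (σ i (j i)) (src i) l) (A i.succ l))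
        = dist (src i) (A i.succ (σ i (j i))) := by
      rw [Finset.sum_eq_single (σ i (j i))]
      · rw [Function.update_self]
      · intro l _ hl
        rw [Function.update_of_ne hl, dist_self]
      · simp
    simp only [Equiv.Perm.one_apply, this, hE]
    exact dist_triangle _ _ _
  have hEnn : ∀ i, 0 ≤ E i := fun i => by simp only [hE]; positivity
  have hsumF : ∑ i : Fin m, F i ≤ ∑ i : Fin m, E i := by
    rcases Nat.eq_zero_or_pos m with hm | hm
    · subst hm; simp
    obtain ⟨m', rfl⟩ : ∃ m', m = m' + 1 := ⟨m - 1, (Nat.succ_pred_eq_of_pos hm).symm⟩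
    rw [Fin.sum_univ_succ, Fin.sum_univ_castSucc (f := E)]
    have hF0 : F 0 = 0 := by
      have : (0 : Fin (m' + 1)).castSucc = 0 := rfl
      rw [hF]
      simp only [this, hB0, hA0]
      exact matchDist_self A0
    have hterm : ∀ i : Fin m', F i.succ ≤ E i.castSucc := by
      intro i
      have hcs : (i.succ : Fin (m' + 1)).castSucc = (i.castSucc : Fin (m' + 1)).succ :=
        (Fin.succ_castSucc i).symm
      rw [hF]
      simp only [hcs]
      exact hFE i.castSucc
    calc F 0 + ∑ i : Fin m', F i.succ = ∑ i : Fin m', F i.succ := by rw [hF0, zero_add]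
      _ ≤ ∑ i : Fin m', E i.castSucc := sum_le_sum fun i _ => hterm i
      _ ≤ _ := le_add_of_nonneg_right (hEnn _)
  -- assemble
  refine le_trans (csInf_le hbdd ⟨B, hB0, ?_, rfl⟩) ?_
  · intro i
    exact ⟨σ i (j i), by rw [hBsucc i, Function.update_self]⟩
  calc ∑ i : Fin m, matchDist (B i.castSucc) (B i.succ)
      ≤ ∑ i : Fin m, (F i + G i) := sum_le_sum fun i _ => hstep i
    _ = (∑ i : Fin m, F i) + ∑ i : Fin m, G i := sum_add_distrib
    _ ≤ (∑ i : Fin m, E i) + ∑ i : Fin m, G i := add_le_add_left hsumF _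
    _ = ∑ i : Fin m, (G i + E i) := by rw [add_comm, ← sum_add_distrib]
    _ = ∑ i : Fin m, uberServe (A i.castSucc) (A i.succ) (src i) (dst i) := by
        refine sum_congr rfl fun i _ => ?_
        rw [hmin i, hG, hE]
        ring
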